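/- For every μ > 0, the function x ↦ f(x;μ) is strictly convex on ℝ^n. -/

import Mathlib

open Real Filter

noncomputable section

variable {n m : ℕ}

/-- `g_i(x;μ) = √(‖x − c_i‖² + μ²)`. -/
def sebG (c : Fin m → EuclideanSpace ℝ (Fin n)) (μ : ℝ) (x : EuclideanSpace ℝ (Fin n))
    (i : Fin m) : ℝ :=
  Real.sqrt (‖x - c i‖ ^ 2 + μ ^ 2)

/-- `f_i(x;μ) = g_i(x;μ) + r_i`. -/
def sebFi (c : Fin m → EuclideanSpace ℝ (Fin n)) (r : Fin m → ℝ) (μ : ℝ)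
    (x : EuclideanSpace ℝ (Fin n)) (i : Fin m) : ℝ :=
  sebG c μ x i + r i

/-- the log-exponential aggregation function `f(x;μ) = μ ln(Σ_i exp(f_i(x;μ)/μ))`. -/
def sebFmu (c : Fin m → EuclideanSpace ℝ (Fin n)) (r : Fin m → ℝ) (μ : ℝ)
    (x : EuclideanSpace ℝ (Fin n)) : ℝ :=
  μ * Real.log (∑ i : Fin m, Real.exp (sebFi c r μ x i / μ))

/-- `f(x) = max_i (‖x − c_i‖ + r_i)`. -/
def sebF (c : Fin m → EuclideanSpace ℝ (Fin n)) (r : Fin m → ℝ)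
    (x : EuclideanSpace ℝ (Fin n)) : ℝ :=
  ⨆ i : Fin m, (‖x - c i‖ + r i)

/-- `f_∞(x;μ) = max_i f_i(x;μ)`. -/
def sebFinf (c : Fin m → EuclideanSpace ℝ (Fin n)) (r : Fin m → ℝ) (μ : ℝ)
    (x : EuclideanSpace ℝ (Fin n)) : ℝ :=
  ⨆ i : Fin m, sebFi c r μ x i

/-- `λ_i(x;μ)`. -/
def sebLam (c : Fin m → EuclideanSpace ℝ (Fin n)) (r : Fin m → ℝ) (μ : ℝ)
    (x : EuclideanSpace ℝ (Fin n)) (i : Fin m) : ℝ :=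
  Real.exp (sebFi c r μ x i / μ) / ∑ j : Fin m, Real.exp (sebFi c r μ x j / μ)

/-- `∇f_i(x;μ) = (x − c_i)/g_i(x;μ)`. -/
def sebGradI (c : Fin m → EuclideanSpace ℝ (Fin n)) (μ : ℝ)
    (x : EuclideanSpace ℝ (Fin n)) (i : Fin m) : EuclideanSpace ℝ (Fin n) :=
  (sebG c μ x i)⁻¹ • (x - c i)

/-- `∇f(x;μ) = Σ_i λ_i(x;μ) ∇f_i(x;μ)`. -/
def sebGrad (c : Fin m → EuclideanSpace ℝ (Fin n)) (r : Fin m → ℝ) (μ : ℝ)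
    (x : EuclideanSpace ℝ (Fin n)) : EuclideanSpace ℝ (Fin n) :=
  ∑ i : Fin m, sebLam c r μ x i • sebGradI c μ x i

/-- `S(x;μ,ε) = {i : λ_i(x;μ) ≥ ε}`. -/
def sebS (c : Fin m → EuclideanSpace ℝ (Fin n)) (r : Fin m → ℝ) (μ ε : ℝ)
    (x : EuclideanSpace ℝ (Fin n)) : Finset (Fin m) :=
  Finset.univ.filter (fun i => ε ≤ sebLam c r μ x i)

/-- `λ̃_i(x;μ)`. -/
def sebLamT (c : Fin m → EuclideanSpace ℝ (Fin n)) (r : Fin m → ℝ) (μ ε : ℝ)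
    (x : EuclideanSpace ℝ (Fin n)) (i : Fin m) : ℝ :=
  Real.exp (sebFi c r μ x i / μ) / ∑ j ∈ sebS c r μ ε x, Real.exp (sebFi c r μ x j / μ)

/-- the truncated log-exponential function `f̃(x;μ)`. -/
def sebFmuT (c : Fin m → EuclideanSpace ℝ (Fin n)) (r : Fin m → ℝ) (μ ε : ℝ)
    (x : EuclideanSpace ℝ (Fin n)) : ℝ :=
  μ * Real.log (∑ i ∈ sebS c r μ ε x, Real.exp (sebFi c r μ x i / μ))

/-- `∇f̃(x;μ) = Σ_{i∈S} λ̃_i(x;μ) ∇f_i(x;μ)`. -/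
def sebGradT (c : Fin m → EuclideanSpace ℝ (Fin n)) (r : Fin m → ℝ) (μ ε : ℝ)
    (x : EuclideanSpace ℝ (Fin n)) : EuclideanSpace ℝ (Fin n) :=
  ∑ i ∈ sebS c r μ ε x, sebLamT c r μ ε x i • sebGradI c μ x i

/-- `∇²f_i(x;μ) = (1/g_i) I_n − (x−c_i)(x−c_i)ᵀ/g_i³` as an `n×n` matrix. -/
def sebHessI (c : Fin m → EuclideanSpace ℝ (Fin n)) (μ : ℝ)
    (x : EuclideanSpace ℝ (Fin n)) (i : Fin m) : Matrix (Fin n) (Fin n) ℝ :=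
  (sebG c μ x i)⁻¹ • (1 : Matrix (Fin n) (Fin n) ℝ)
    - ((sebG c μ x i) ^ 3)⁻¹ •
        Matrix.vecMulVec (fun j => (x - c i) j) (fun j => (x - c i) j)

/-- `∇²f(x;μ)` as an `n×n` matrix. -/
def sebHess (c : Fin m → EuclideanSpace ℝ (Fin n)) (r : Fin m → ℝ) (μ : ℝ)
    (x : EuclideanSpace ℝ (Fin n)) : Matrix (Fin n) (Fin n) ℝ :=
  (∑ i : Fin m, (sebLam c r μ x i • sebHessI c μ x i
      + (μ⁻¹ * sebLam c r μ x i) •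
          Matrix.vecMulVec (fun j => sebGradI c μ x i j) (fun j => sebGradI c μ x i j)))
    - μ⁻¹ • Matrix.vecMulVec (fun j => sebGrad c r μ x j) (fun j => sebGrad c r μ x j)

/-- `∇²f̃(x;μ)` as an `n×n` matrix. -/
def sebHessT (c : Fin m → EuclideanSpace ℝ (Fin n)) (r : Fin m → ℝ) (μ ε : ℝ)
    (x : EuclideanSpace ℝ (Fin n)) : Matrix (Fin n) (Fin n) ℝ :=
  (∑ i ∈ sebS c r μ ε x, (sebLamT c r μ ε x i • sebHessI c μ x i
      + (μ⁻¹ * sebLamT c r μ ε x i) •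
          Matrix.vecMulVec (fun j => sebGradI c μ x i j) (fun j => sebGradI c μ x i j)))
    - μ⁻¹ • Matrix.vecMulVec (fun j => sebGradT c r μ ε x j) (fun j => sebGradT c r μ ε x j)

end

private lemma sebG_sc {n : ℕ} (ci : EuclideanSpace ℝ (Fin n)) {μ : ℝ} (hμ : 0 < μ)
    {x y : EuclideanSpace ℝ (Fin n)} (hxy : x ≠ y) {a b : ℝ}
    (ha : 0 < a) (hb : 0 < b) (hab : a + b = 1) :
    Real.sqrt (‖a • x + b • y - ci‖ ^ 2 + μ ^ 2)
      < a * Real.sqrt (‖x - ci‖ ^ 2 + μ ^ 2) + b * Real.sqrt (‖y - ci‖ ^ 2 + μ ^ 2) := by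
  let p : WithLp 2 (EuclideanSpace ℝ (Fin n) × ℝ) := (WithLp.equiv 2 _).symm (x - ci, μ)
  let q : WithLp 2 (EuclideanSpace ℝ (Fin n) × ℝ) := (WithLp.equiv 2 _).symm (y - ci, μ)
  have hnp : ‖p‖ = Real.sqrt (‖x - ci‖ ^ 2 + μ ^ 2) := by
    rw [WithLp.prod_norm_eq_of_L2]
    simp [p, Real.norm_eq_abs, sq_abs]
  have hnq : ‖q‖ = Real.sqrt (‖y - ci‖ ^ 2 + μ ^ 2) := by
    rw [WithLp.prod_norm_eq_of_L2]
    simp [q, Real.norm_eq_abs, sq_abs]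
  have hsum : a • ((x - ci : EuclideanSpace ℝ (Fin n)), μ) + b • (y - ci, μ)
      = ((a • x + b • y - ci : EuclideanSpace ℝ (Fin n)), μ) := by
    rw [Prod.smul_mk, Prod.smul_mk, Prod.mk_add_mk, Prod.mk.injEq]
    constructor
    · rw [smul_sub, smul_sub,
        show a • x - a • ci + (b • y - b • ci) = a • x + b • y - (a • ci + b • ci) by abel,
        ← add_smul, hab, one_smul]
    · show a * μ + b * μ = μ
      rw [← add_mul, hab, one_mul]
  have hcombo : (a • p + b • q : WithLp 2 (EuclideanSpace ℝ (Fin n) × ℝ))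
      = (WithLp.equiv 2 _).symm (a • x + b • y - ci, μ) := by
    rw [show a • p + b • q
        = (WithLp.equiv 2 _).symm (a • ((x - ci : EuclideanSpace ℝ (Fin n)), μ) + b • (y - ci, μ))
        by rw [WithLp.equiv_symm_apply, WithLp.toLp_add, WithLp.toLp_smul, WithLp.toLp_smul]; rfl, hsum]
  have hcn : ‖a • p + b • q‖ = Real.sqrt (‖a • x + b • y - ci‖ ^ 2 + μ ^ 2) := by
    rw [hcombo, WithLp.prod_norm_eq_of_L2]
    simp [Real.norm_eq_abs, sq_abs]
  have hpne : p ≠ 0 := by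
    intro h
    rw [show (0 : WithLp 2 (EuclideanSpace ℝ (Fin n) × ℝ)) = (WithLp.equiv 2 _).symm 0 from
      rfl] at h
    have := ((WithLp.equiv 2 (EuclideanSpace ℝ (Fin n) × ℝ)).symm.injective h)
    exact hμ.ne' (congrArg Prod.snd this)
  have hqne : q ≠ 0 := by
    intro h
    rw [show (0 : WithLp 2 (EuclideanSpace ℝ (Fin n) × ℝ)) = (WithLp.equiv 2 _).symm 0 from
      rfl] at h
    have := ((WithLp.equiv 2 (EuclideanSpace ℝ (Fin n) × ℝ)).symm.injective h)
    exact hμ.ne' (congrArg Prod.snd this)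
  have hnot : ¬ SameRay ℝ (a • p) (b • q) := by
    intro h
    obtain ⟨s, t, hs, ht, hst⟩ := h.exists_pos (smul_ne_zero ha.ne' hpne)
      (smul_ne_zero hb.ne' hqne)
    rw [smul_smul, smul_smul, show (s * a) • p = (WithLp.equiv 2 _).symm
        ((s * a) • ((x - ci : EuclideanSpace ℝ (Fin n)), μ)) by
          rw [WithLp.equiv_symm_apply, WithLp.toLp_smul]; rfl,
      show (t * b) • q = (WithLp.equiv 2 _).symm
        ((t * b) • ((y - ci : EuclideanSpace ℝ (Fin n)), μ)) by
          rw [WithLp.equiv_symm_apply, WithLp.toLp_smul]; rfl] at hst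
    have hst' := (WithLp.equiv 2 (EuclideanSpace ℝ (Fin n) × ℝ)).symm.injective hst
    have h2 : s * a * μ = t * b * μ := congrArg Prod.snd hst'
    have h1 : (s * a) • (x - ci) = (t * b) • (y - ci) := congrArg Prod.fst hst'
    have hE : s * a = t * b := mul_right_cancel₀ hμ.ne' h2
    rw [hE] at h1
    have h3 := smul_right_injective (EuclideanSpace ℝ (Fin n))
      (mul_ne_zero ht.ne' hb.ne') h1
    exact hxy (by have := sub_left_injective h3; exact this)
  have := norm_add_lt_of_not_sameRay hnot
  rw [norm_smul, norm_smul, Real.norm_eq_abs, abs_of_pos ha, Real.norm_eq_abs,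
    abs_of_pos hb, hnp, hnq, hcn] at this
  exact this

theorem stmt_2 (n m : ℕ) (hm : 1 ≤ m) (c : Fin m → EuclideanSpace ℝ (Fin n))
    (r : Fin m → ℝ) (hr : ∀ i, 0 ≤ r i) (μ : ℝ) (hμ : 0 < μ) :
    StrictConvexOn ℝ (Set.univ : Set (EuclideanSpace ℝ (Fin n))) (sebFmu c r μ) := by
  haveI : NeZero m := ⟨Nat.one_le_iff_ne_zero.mp hm⟩
  refine ⟨convex_univ, fun x _ y _ hxy a b ha hb hab => ?_⟩
  set A : Fin m → ℝ := fun i => sebFi c r μ x i with hA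
  set B : Fin m → ℝ := fun i => sebFi c r μ y i with hB
  -- pointwise strict convexity of sebFi
  have hfi : ∀ i, sebFi c r μ (a • x + b • y) i < a * A i + b * B i := by
    intro i
    have := sebG_sc (c i) hμ hxy ha hb hab
    unfold sebFi sebG
    have : Real.sqrt (‖a • x + b • y - c i‖ ^ 2 + μ ^ 2) + r i
        < a * Real.sqrt (‖x - c i‖ ^ 2 + μ ^ 2) + b * Real.sqrt (‖y - c i‖ ^ 2 + μ ^ 2) + r i :=
      add_lt_add_left this _
    calc Real.sqrt (‖a • x + b • y - c i‖ ^ 2 + μ ^ 2) + r i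
        < a * Real.sqrt (‖x - c i‖ ^ 2 + μ ^ 2) + b * Real.sqrt (‖y - c i‖ ^ 2 + μ ^ 2) + r i :=
          this
      _ = a * A i + b * B i := by
          simp only [hA, hB, sebFi, sebG]
          linear_combination (-(r i)) * hab
  -- sums
  have hSx : (0:ℝ) < ∑ i : Fin m, Real.exp (A i / μ) :=
    Finset.sum_pos (fun i _ => Real.exp_pos _) Finset.univ_nonempty
  have hSy : (0:ℝ) < ∑ i : Fin m, Real.exp (B i / μ) :=
    Finset.sum_pos (fun i _ => Real.exp_pos _) Finset.univ_nonempty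
  -- step 1: strict inequality
  have step1 : ∑ i : Fin m, Real.exp (sebFi c r μ (a • x + b • y) i / μ)
      < ∑ i : Fin m, Real.exp ((a * A i + b * B i) / μ) := by
    apply Finset.sum_lt_sum_of_nonempty Finset.univ_nonempty
    intro i _
    exact Real.exp_lt_exp.mpr ((div_lt_div_iff_of_pos_right hμ).mpr (hfi i))
  -- step 2: Hoelder
  have ha1 : a < 1 := by linarith
  have hpq : Real.HolderConjugate a⁻¹ b⁻¹ :=
    Real.holderConjugate_iff.mpr ⟨(one_lt_inv_iff₀).mpr ⟨ha, ha1⟩, by rw [inv_inv, inv_inv]; exact hab⟩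
  have step2 : ∑ i : Fin m, Real.exp ((a * A i + b * B i) / μ)
      ≤ (∑ i : Fin m, Real.exp (A i / μ)) ^ a * (∑ i : Fin m, Real.exp (B i / μ)) ^ b := by
    have h := Real.inner_le_Lp_mul_Lq Finset.univ
      (fun i => Real.exp (a * (A i / μ))) (fun i => Real.exp (b * (B i / μ))) hpq
    have e1 : ∀ i : Fin m, Real.exp ((a * A i + b * B i) / μ)
        = Real.exp (a * (A i / μ)) * Real.exp (b * (B i / μ)) := by
      intro i
      rw [← Real.exp_add]
      congr 1
      field_simp
    have e2 : ∀ i : Fin m, |Real.exp (a * (A i / μ))| ^ (a⁻¹) = Real.exp (A i / μ) := by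
      intro i
      rw [abs_of_pos (Real.exp_pos _), ← Real.exp_mul, mul_comm a (A i / μ), mul_assoc,
        mul_inv_cancel₀ ha.ne', mul_one]
    have e3 : ∀ i : Fin m, |Real.exp (b * (B i / μ))| ^ (b⁻¹) = Real.exp (B i / μ) := by
      intro i
      rw [abs_of_pos (Real.exp_pos _), ← Real.exp_mul, mul_comm b (B i / μ), mul_assoc,
        mul_inv_cancel₀ hb.ne', mul_one]
    simp only [e2, e3, one_div, inv_inv] at h
    calc ∑ i : Fin m, Real.exp ((a * A i + b * B i) / μ)
        = ∑ i : Fin m, Real.exp (a * (A i / μ)) * Real.exp (b * (B i / μ)) := by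
          exact Finset.sum_congr rfl fun i _ => e1 i
      _ ≤ _ := h
  -- combine
  have hmid : (0:ℝ) < ∑ i : Fin m, Real.exp ((a * A i + b * B i) / μ) :=
    Finset.sum_pos (fun i _ => Real.exp_pos _) Finset.univ_nonempty
  have hlog : Real.log (∑ i : Fin m, Real.exp (sebFi c r μ (a • x + b • y) i / μ))
      < a * Real.log (∑ i : Fin m, Real.exp (A i / μ))
        + b * Real.log (∑ i : Fin m, Real.exp (B i / μ)) := by
    calc Real.log (∑ i : Fin m, Real.exp (sebFi c r μ (a • x + b • y) i / μ))
        < Real.log (∑ i : Fin m, Real.exp ((a * A i + b * B i) / μ)) :=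
          Real.log_lt_log (Finset.sum_pos (fun i _ => Real.exp_pos _) Finset.univ_nonempty) step1
      _ ≤ Real.log ((∑ i : Fin m, Real.exp (A i / μ)) ^ a
            * (∑ i : Fin m, Real.exp (B i / μ)) ^ b) :=
          Real.log_le_log (by positivity) step2
      _ = a * Real.log (∑ i : Fin m, Real.exp (A i / μ))
            + b * Real.log (∑ i : Fin m, Real.exp (B i / μ)) := by
          rw [Real.log_mul (by positivity) (by positivity), Real.log_rpow hSx,
            Real.log_rpow hSy]
  have := mul_lt_mul_of_pos_left hlog hμ
  simp only [sebFmu, smul_eq_mul]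
  calc μ * Real.log (∑ i : Fin m, Real.exp (sebFi c r μ (a • x + b • y) i / μ))
      < μ * (a * Real.log (∑ i : Fin m, Real.exp (A i / μ))
          + b * Real.log (∑ i : Fin m, Real.exp (B i / μ))) := this
    _ = a * (μ * Real.log (∑ i : Fin m, Real.exp (A i / μ)))
          + b * (μ * Real.log (∑ i : Fin m, Real.exp (B i / μ))) := by ring
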